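/- For every η₀ > 0, the linear span of the family of functions (θ,φ) ↦ √(cosh η₀ − cos θ) · Φ_n^ν(θ) Φ_m^μ(φ), indexed by all admissible quadruples (n,m,ν,μ), is dense in L² of the square (−π,π) × (−π,π) with Lebesgue measure. (Completeness of the boundary restrictions of the interior toroidal harmonics.) -/

import Mathlib

open Real MeasureTheory intervalIntegral Filter Topology

/-- Associated Legendre function of the second kind of half-integer degree,
`Q_{n-1/2}^m(t)`, defined via its real integral representation (valid for `t > 1`). -/
noncomputable def Qh (n m : ℕ) (t : ℝ) : ℝ :=
  ((-1 : ℝ) ^ m / (2 : ℝ) ^ ((n : ℝ) + 1 / 2)) *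
    (Real.Gamma ((n : ℝ) + (m : ℝ) + 1 / 2) / Real.Gamma ((n : ℝ) + 1 / 2)) *
    (t ^ 2 - 1) ^ ((m : ℝ) / 2) *
    ∫ s in (-1 : ℝ)..1, (1 - s ^ 2) ^ ((n : ℝ) - 1 / 2) * (t - s) ^ (-((n : ℝ) + (m : ℝ) + 1 / 2))

/-- `q_{n,m} = Q_{n-1/2}^m(cosh η₀)`. -/
noncomputable def qh (η₀ : ℝ) (n m : ℕ) : ℝ := Qh n m (Real.cosh η₀)

/-- `Φ_n^{+1}(θ) = cos (n θ)`, `Φ_n^{-1}(θ) = sin (n θ)`. -/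
noncomputable def Phi (ν : ℤ) (n : ℤ) (θ : ℝ) : ℝ :=
  if ν = 1 then Real.cos ((n : ℝ) * θ) else Real.sin ((n : ℝ) * θ)

/-- A quadruple `(n, m, ν, μ)` is admissible. -/
def Admissible (n m : ℕ) (ν μ : ℤ) : Prop :=
  (ν = 1 ∨ ν = -1) ∧ (μ = 1 ∨ μ = -1) ∧ ¬(n = 0 ∧ ν = -1) ∧ ¬(m = 0 ∧ μ = -1)

/-- Toroidal Neumann constant `ρ_{n,m}(η₀)` (`n ≥ 1`). -/
noncomputable def rhoT (η₀ : ℝ) (n m : ℕ) : ℝ :=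
  if n = 1 then
    (1 / (2 * Real.sinh η₀)) *
      (Real.cosh η₀ + (2 * (m : ℝ) - 1) * qh η₀ 1 m / qh η₀ 0 m)
  else
    (1 / (4 * Real.sinh η₀)) *
      ((2 * (n : ℝ) - 1) * Real.cosh η₀ +
        (2 * ((m : ℝ) - (n : ℝ)) + 1) * qh η₀ n m / qh η₀ (n - 1) m)

/-- Toroidal Neumann constant `σ_{n,m}(η₀)`. -/
noncomputable def sigmaT (η₀ : ℝ) (n m : ℕ) : ℝ :=
  (-1 / (2 * Real.sinh η₀)) *
    ((2 * (n : ℝ) * Real.cosh η₀ ^ 2 + 1) +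
      (2 * ((m : ℝ) - (n : ℝ)) - 1) * Real.cosh η₀ * qh η₀ (n + 1) m / qh η₀ n m)

/-- Toroidal Neumann constant `τ_{n,m}(η₀)`. -/
noncomputable def tauT (η₀ : ℝ) (n m : ℕ) : ℝ :=
  (1 / (4 * Real.sinh η₀)) *
    ((2 * (n : ℝ) + 3) * Real.cosh η₀ +
      (2 * ((m : ℝ) - (n : ℝ)) - 3) * qh η₀ (n + 2) m / qh η₀ (n + 1) m)

/-- The normal derivative `N_{n,m}^{ν,μ}(θ,φ)` of the interior toroidal harmonic
`I_{n,m}^{ν,μ}` on the torus `η = η₀`. -/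
noncomputable def NDer (η₀ : ℝ) (n m : ℕ) (ν μ : ℤ) (θ φ : ℝ) : ℝ :=
  (Real.sqrt (Real.cosh η₀ - Real.cos θ) / (4 * Real.sinh η₀)) * Phi μ (m : ℤ) φ *
    (Phi ν ((n : ℤ) - 1) θ *
        ((1 + 2 * (n : ℝ)) * Real.cosh η₀ -
          (2 * ((n : ℝ) - (m : ℝ)) + 1) * qh η₀ (n + 1) m / qh η₀ n m) -
      2 * Phi ν (n : ℤ) θ *
        ((2 * (n : ℝ) * Real.cosh η₀ ^ 2 + 1) -
          (2 * ((n : ℝ) - (m : ℝ)) + 1) * Real.cosh η₀ * qh η₀ (n + 1) m / qh η₀ n m) +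
      Phi ν ((n : ℤ) + 1) θ *
        ((1 + 2 * (n : ℝ)) * Real.cosh η₀ -
          (2 * ((n : ℝ) - (m : ℝ)) + 1) * qh η₀ (n + 1) m / qh η₀ n m))

/-- Interior toroidal harmonic `I_{n,m}^{ν,μ}[η₀]` in toroidal coordinates. -/
noncomputable def Ih (η₀ : ℝ) (n m : ℕ) (ν μ : ℤ) (η θ φ : ℝ) : ℝ :=
  Real.sqrt (Real.cosh η - Real.cos θ) *
    (Qh n m (Real.cosh η) / Qh n m (Real.cosh η₀)) * Phi ν (n : ℤ) θ * Phi μ (m : ℤ) φ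

/-- completeness of the boundary restrictions of the interior toroidal
harmonics: their span is dense in `L²((-π,π) × (-π,π))`. -/

local instance fact_two_pi_pos : Fact (0 < 2*π) := ⟨Real.two_pi_pos⟩

/-- 2D Fourier monomials on the torus. -/
noncomputable def E2 : ℤ × ℤ → C(AddCircle (2*π) × AddCircle (2*π), ℂ) := fun nm =>
  ((fourier nm.1).comp ⟨Prod.fst, continuous_fst⟩) *
  ((fourier nm.2).comp ⟨Prod.snd, continuous_snd⟩)

lemma E2_apply (nm : ℤ × ℤ) (x : AddCircle (2*π) × AddCircle (2*π)) :
    E2 nm x = fourier nm.1 x.1 * fourier nm.2 x.2 := rfl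

noncomputable def F2 : StarSubalgebra ℂ C(AddCircle (2*π) × AddCircle (2*π), ℂ) where
  toSubalgebra := Algebra.adjoin ℂ (Set.range E2)
  star_mem' := by
    show Algebra.adjoin ℂ (Set.range E2) ≤ star (Algebra.adjoin ℂ (Set.range E2))
    refine Algebra.adjoin_le ?_
    rintro - ⟨⟨n, m⟩, rfl⟩
    exact Algebra.subset_adjoin ⟨(-n, -m), by
      ext x
      simp [E2_apply, fourier_neg, mul_comm]⟩

lemma F2_coe :
    Subalgebra.toSubmodule F2.toSubalgebra = Submodule.span ℂ (Set.range E2) := by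
  apply Algebra.adjoin_eq_span_of_subset
  refine Set.Subset.trans ?_ Submodule.subset_span
  intro x hx
  refine Submonoid.closure_induction (fun _ => id) ⟨(0,0), ?_⟩ ?_ hx
  · ext1 z
    simp [E2_apply, fourier_zero]
  · rintro - - - - ⟨a, rfl⟩ ⟨b, rfl⟩
    refine ⟨a + b, ?_⟩
    ext1 z
    simp only [E2_apply, ContinuousMap.mul_apply, Prod.fst_add, Prod.snd_add, fourier_add]
    ring

lemma F2_separatesPoints : F2.SeparatesPoints := by
  intro x y hxy
  by_cases h1 : x.1 = y.1
  · have h2 : x.2 ≠ y.2 := fun h => hxy (Prod.ext h1 h)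
    refine ⟨_, ⟨E2 (0, 1), Algebra.subset_adjoin ⟨(0,1), rfl⟩, rfl⟩, ?_⟩
    simp only [E2_apply, fourier_zero, one_mul, fourier_one]
    intro h
    exact h2 (AddCircle.injective_toCircle Real.two_pi_pos.ne' (Subtype.coe_inj.mp h))
  · refine ⟨_, ⟨E2 (1, 0), Algebra.subset_adjoin ⟨(1,0), rfl⟩, rfl⟩, ?_⟩
    simp only [E2_apply, fourier_zero, mul_one, fourier_one]
    intro h
    exact h1 (AddCircle.injective_toCircle Real.two_pi_pos.ne' (Subtype.coe_inj.mp h))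

lemma F2_closure_eq_top : F2.topologicalClosure = ⊤ :=
  ContinuousMap.starSubalgebra_topologicalClosure_eq_top_of_separatesPoints F2
    F2_separatesPoints

lemma span_E2_closure_eq_top :
    (Submodule.span ℂ (Set.range E2)).topologicalClosure = ⊤ := by
  rw [← F2_coe]
  exact congr_arg (Subalgebra.toSubmodule <| StarSubalgebra.toSubalgebra ·) F2_closure_eq_top

lemma square_ae :
    (volume.restrict (Set.Ioo (-π) π ×ˢ Set.Ioo (-π) π) : Measure (ℝ × ℝ)) =
      volume.restrict (Set.Ioc (-π) π ×ˢ Set.Ioc (-π) π) := by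
  apply Measure.restrict_congr_set
  rw [Filter.eventuallyEq_set]
  have hnull : (volume : Measure (ℝ × ℝ))
      ((Set.univ ×ˢ ({π} : Set ℝ)) ∪ (({π} : Set ℝ) ×ˢ Set.univ)) = 0 := by
    refine measure_union_null ?_ ?_
    · rw [Measure.volume_eq_prod, Measure.prod_prod]
      simp
    · rw [Measure.volume_eq_prod, Measure.prod_prod]
      simp
  refine (Filter.eventuallyEq_set.mp ?_)
  have hsub : ((Set.Ioc (-π) π ×ˢ Set.Ioc (-π) π) \ (Set.Ioo (-π) π ×ˢ Set.Ioo (-π) π)) ⊆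
      (Set.univ ×ˢ ({π} : Set ℝ)) ∪ (({π} : Set ℝ) ×ˢ Set.univ) := by
    rintro ⟨a, b⟩ ⟨⟨ha, hb⟩, hnot⟩
    simp only [Set.mem_prod, Set.mem_Ioo, Set.mem_Ioc] at *
    by_cases hA : a < π
    · left; constructor
      · trivial
      · simp only [Set.mem_singleton_iff]
        by_contra hB
        exact hnot ⟨⟨ha.1, hA⟩, hb.1, lt_of_le_of_ne hb.2 hB⟩
    · right
      refine ⟨?_, trivial⟩
      simp only [Set.mem_singleton_iff]
      exact le_antisymm ha.2 (not_lt.mp hA)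
  have h1 : (volume : Measure (ℝ × ℝ))
      ((Set.Ioc (-π) π ×ˢ Set.Ioc (-π) π) \ (Set.Ioo (-π) π ×ˢ Set.Ioo (-π) π)) = 0 :=
    measure_mono_null hsub hnull
  have h2 : (volume : Measure (ℝ × ℝ))
      ((Set.Ioo (-π) π ×ˢ Set.Ioo (-π) π) \ (Set.Ioc (-π) π ×ˢ Set.Ioc (-π) π)) = 0 := by
    refine measure_mono_null ?_ (measure_empty (μ := (volume : Measure (ℝ × ℝ))))
    rintro ⟨a, b⟩ ⟨⟨ha, hb⟩, hnot⟩
    exact hnot ⟨Set.Ioo_subset_Ioc_self ha, Set.Ioo_subset_Ioc_self hb⟩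
  exact MeasureTheory.ae_eq_set.mpr ⟨h2, h1⟩

lemma mp_Psi : MeasurePreserving
    (Prod.map (fun x : ℝ => (x : AddCircle (2*π))) (fun x : ℝ => (x : AddCircle (2*π))))
    (volume.restrict (Set.Ioc (-π) π ×ˢ Set.Ioc (-π) π))
    (volume : Measure (AddCircle (2*π) × AddCircle (2*π))) := by
  have h := AddCircle.measurePreserving_mk (2*π) (-π)
  rw [show -π + 2*π = π by ring] at h
  have := h.prod h
  rwa [Measure.prod_restrict, ← Measure.volume_eq_prod, ← Measure.volume_eq_prod] at this

lemma equivIoc_coe (x : ℝ) (hx : x ∈ Set.Ioc (-π) π) :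
    ((AddCircle.equivIoc (2*π) (-π) (x : AddCircle (2*π))) : ℝ) = x := by
  have hx' : x ∈ Set.Ioc (-π) (-π + 2*π) := by
    rw [show -π + 2*π = π by ring]; exact hx
  have : AddCircle.equivIoc (2*π) (-π) ↑x = ⟨x, hx'⟩ := by
    rw [Equiv.apply_eq_iff_eq_symm_apply]
    rfl
  rw [this]

lemma fourier_eq (n : ℤ) (x : ℝ) :
    fourier n (x : AddCircle (2*π)) = Complex.exp ((((n:ℝ) * x : ℝ) : ℂ) * Complex.I) := by
  rw [fourier_coe_apply]
  congr 1
  push_cast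
  have hπ : (π : ℂ) ≠ 0 := by exact_mod_cast Real.pi_ne_zero
  field_simp

lemma torus_approx (G : AddCircle (2*π) × AddCircle (2*π) → ℂ)
    (hG : MemLp G 2 (volume : Measure (AddCircle (2*π) × AddCircle (2*π))))
    (δ : ℝ) (hδ : 0 < δ) :
    ∃ P ∈ Submodule.span ℂ (Set.range E2),
      eLpNorm (fun x => G x - P x) 2
        (volume : Measure (AddCircle (2*π) × AddCircle (2*π))) < ENNReal.ofReal δ := by
  haveI : (volume : Measure (AddCircle (2*π) × AddCircle (2*π))).WeaklyRegular :=
    MeasureTheory.Measure.WeaklyRegular.of_pseudoMetrizableSpace_of_isFiniteMeasure _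
  obtain ⟨g, hg, hgmem⟩ := hG.exists_boundedContinuous_eLpNorm_sub_le (p := 2)
    (by norm_num) (ε := ENNReal.ofReal (δ/3)) ((ENNReal.ofReal_pos.mpr (by linarith)).ne')
  -- approximate g in sup norm by an element of the span
  have hmem : (g.toContinuousMap : C(AddCircle (2*π) × AddCircle (2*π), ℂ)) ∈
      closure (Submodule.span ℂ (Set.range E2) : Set _) := by
    rw [← Submodule.topologicalClosure_coe, span_E2_closure_eq_top]
    trivial
  obtain ⟨P, hPmem, hPd⟩ := Metric.mem_closure_iff.mp hmem (δ/21) (by linarith)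
  refine ⟨P, hPmem, ?_⟩
  -- eLpNorm (g - P) bound
  have hμ : (volume : Measure (AddCircle (2*π) × AddCircle (2*π))) Set.univ =
      ENNReal.ofReal (2*π) * ENNReal.ofReal (2*π) := by
    rw [MeasureTheory.Measure.volume_eq_prod, ← Set.univ_prod_univ, Measure.prod_prod,
      AddCircle.measure_univ]
  have hgP : eLpNorm (fun x => g x - P x) 2
      (volume : Measure (AddCircle (2*π) × AddCircle (2*π))) ≤ ENNReal.ofReal (δ/3) := by
    have hb : ∀ᵐ x ∂(volume : Measure (AddCircle (2*π) × AddCircle (2*π))),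
        ‖g x - P x‖ ≤ δ/21 := by
      refine Filter.Eventually.of_forall fun x => ?_
      have := ContinuousMap.dist_apply_le_dist (f := g.toContinuousMap) (g := P) x
      rw [dist_eq_norm] at this
      exact le_of_lt (lt_of_le_of_lt this hPd)
    have h1 := eLpNorm_le_of_ae_bound (p := 2) hb
    refine le_trans h1 ?_
    rw [hμ]
    have h40 : ENNReal.ofReal (2*π) * ENNReal.ofReal (2*π) ≤ ENNReal.ofReal 40 := by
      rw [← ENNReal.ofReal_mul (by positivity)]
      refine ENNReal.ofReal_le_ofReal ?_
      have h1 := Real.pi_lt_d2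
      have h2 := Real.pi_gt_three
      nlinarith
    have h7 : (ENNReal.ofReal (2*π) * ENNReal.ofReal (2*π)) ^ (ENNReal.toReal 2)⁻¹ ≤
        ENNReal.ofReal 7 := by
      refine le_trans (ENNReal.rpow_le_rpow h40 (by norm_num)) ?_
      have he : (ENNReal.toReal 2)⁻¹ = ((2:ℝ))⁻¹ := by norm_num
      rw [he, ENNReal.ofReal_rpow_of_pos (by norm_num : (0:ℝ) < 40)]
      refine ENNReal.ofReal_le_ofReal ?_
      have : ((2:ℝ))⁻¹ = (1:ℝ)/2 := by norm_num
      rw [this, ← Real.sqrt_eq_rpow]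
      have h49 : (7:ℝ) = Real.sqrt 49 := by
        rw [show (49:ℝ) = 7^2 by norm_num, Real.sqrt_sq (by norm_num : (0:ℝ) ≤ 7)]
      rw [h49]
      exact Real.sqrt_le_sqrt (by norm_num)
    refine le_trans (mul_le_mul_left h7 _) ?_
    rw [← ENNReal.ofReal_mul (by norm_num : (0:ℝ) ≤ 7)]
    exact ENNReal.ofReal_le_ofReal (by linarith)
  -- triangle inequality
  have hsplit : (fun x => G x - P x) =
      (fun x => G x - g x) + (fun x => g x - P x) := by
    funext x; simp
  have hGg : AEStronglyMeasurable (fun x => G x - g x)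
      (volume : Measure (AddCircle (2*π) × AddCircle (2*π))) :=
    hG.aestronglyMeasurable.sub g.continuous.aestronglyMeasurable
  have hgPm : AEStronglyMeasurable (fun x => g x - P x)
      (volume : Measure (AddCircle (2*π) × AddCircle (2*π))) :=
    g.continuous.aestronglyMeasurable.sub P.continuous.aestronglyMeasurable
  calc eLpNorm (fun x => G x - P x) 2 volume
      ≤ eLpNorm (fun x => G x - g x) 2 volume + eLpNorm (fun x => g x - P x) 2 volume := by
        rw [hsplit]
        exact eLpNorm_add_le hGg hgPm one_le_two
    _ ≤ ENNReal.ofReal (δ/3) + ENNReal.ofReal (δ/3) := by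
        refine add_le_add ?_ hgP
        have : (fun x => G x - g x) = G - ⇑g := rfl
        rw [this]; exact hg
    _ = ENNReal.ofReal (δ/3 + δ/3) := by rw [ENNReal.ofReal_add (by linarith) (by linarith)]
    _ < ENNReal.ofReal δ := ENNReal.ofReal_lt_ofReal_iff hδ |>.mpr (by linarith)

def TrigRep (h : ℝ × ℝ → ℝ) : Prop :=
  ∃ (k : ℕ) (c : Fin k → ℝ) (n m : Fin k → ℕ) (ν μ : Fin k → ℤ),
    (∀ i, Admissible (n i) (m i) (ν i) (μ i)) ∧
    ∀ p : ℝ × ℝ, h p = ∑ i, c i * (Phi (ν i) ((n i : ℤ)) p.1 * Phi (μ i) ((m i : ℤ)) p.2)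

lemma rep_zero : TrigRep (fun _ => 0) :=
  ⟨0, ![], ![], ![], ![], ![], fun i => i.elim0, fun p => by simp⟩

lemma rep_add {h₁ h₂ : ℝ × ℝ → ℝ} (H₁ : TrigRep h₁) (H₂ : TrigRep h₂) :
    TrigRep (fun p => h₁ p + h₂ p) := by
  obtain ⟨k₁, c₁, n₁, m₁, ν₁, μ₁, ha₁, he₁⟩ := H₁
  obtain ⟨k₂, c₂, n₂, m₂, ν₂, μ₂, ha₂, he₂⟩ := H₂
  refine ⟨k₁ + k₂, Fin.append c₁ c₂, Fin.append n₁ n₂, Fin.append m₁ m₂,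
    Fin.append ν₁ ν₂, Fin.append μ₁ μ₂, ?_, ?_⟩
  · intro i
    rcases Nat.lt_or_ge (i : ℕ) k₁ with h | h
    · have : i = Fin.castAdd k₂ (i.castLT h) := by simp [Fin.ext_iff]
      rw [this]
      simp only [Fin.append_left]
      exact ha₁ _
    · obtain ⟨j, rfl⟩ : ∃ j : Fin k₂, i = Fin.natAdd k₁ j := by
        refine ⟨⟨i - k₁, ?_⟩, ?_⟩
        · omega
        · simp [Fin.ext_iff]; omega
      simp only [Fin.append_right]
      exact ha₂ _
  · intro p
    rw [Fin.sum_univ_add]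
    simp only [Fin.append_left, Fin.append_right]
    rw [he₁ p, he₂ p]

lemma rep_sum {k : ℕ} (F : Fin k → ℝ × ℝ → ℝ) (hF : ∀ i, TrigRep (F i)) :
    TrigRep (fun p => ∑ i, F i p) := by
  induction k with
  | zero => simpa using rep_zero
  | succ k ih =>
    have : (fun p => ∑ i : Fin (k+1), F i p) =
        fun p => (∑ i : Fin k, F i.succ p) + F 0 p := by
      funext p; rw [Fin.sum_univ_succ]; ring
    rw [this]
    exact rep_add (ih _ (fun i => hF i.succ)) (hF 0)

lemma phi_reduce (ν n : ℤ) : ∃ (e : ℝ) (ν' : ℤ),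
    ((ν' = 1 ∨ ν' = -1) ∧ ¬(n.natAbs = 0 ∧ ν' = -1)) ∧
    ∀ θ : ℝ, Phi ν n θ = e * Phi ν' ((n.natAbs : ℤ)) θ := by
  by_cases hν : ν = 1
  · refine ⟨1, 1, ⟨Or.inl rfl, by simp⟩, fun θ => ?_⟩
    simp only [Phi, hν, if_pos rfl, one_mul, if_pos]
    rcases Int.natAbs_eq n with h | h
    · conv_lhs => rw [h]
    · conv_lhs => rw [h, Int.cast_neg, neg_mul, Real.cos_neg]
  · by_cases hn : n = 0
    · refine ⟨0, 1, ⟨Or.inl rfl, by simp⟩, fun θ => ?_⟩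
      simp [Phi, hν, hn]
    · refine ⟨(n.sign : ℝ), -1, ⟨Or.inr rfl, by simp [Int.natAbs_eq_zero, hn]⟩, fun θ => ?_⟩
      simp only [Phi, if_neg hν, if_neg (by norm_num : ¬(-1 : ℤ) = 1)]
      rcases Int.natAbs_eq n with h | h
      · have hs : n.sign = 1 := by
          rcases Int.lt_or_lt_of_ne hn with h' | h'
          · exfalso; omega
          · exact Int.sign_eq_one_of_pos h'
        rw [hs, Int.cast_one, one_mul]
        conv_lhs => rw [h]
      · have hs : n.sign = -1 := by
          rcases Int.lt_or_lt_of_ne hn with h' | h'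
          · exact Int.sign_eq_neg_one_of_neg h'
          · exfalso; omega
        rw [hs]
        conv_lhs => rw [h, Int.cast_neg, neg_mul, Real.sin_neg]
        push_cast
        ring
lemma rep_basic (a : ℝ) (n m ν μ : ℤ) :
    TrigRep (fun p => a * (Phi ν n p.1 * Phi μ m p.2)) := by
  obtain ⟨e₁, ν', hν', h₁⟩ := phi_reduce ν n
  obtain ⟨e₂, μ', hμ', h₂⟩ := phi_reduce μ m
  refine ⟨1, fun _ => a * e₁ * e₂, fun _ => n.natAbs, fun _ => m.natAbs,
    fun _ => ν', fun _ => μ', ?_, ?_⟩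
  · intro i
    exact ⟨hν'.1, hμ'.1, by simpa using hν'.2, by simpa using hμ'.2⟩
  · intro p
    simp only [Fin.sum_univ_one]
    rw [h₁ p.1, h₂ p.2]
    ring
lemma rep_re_term (c : ℂ) (n m : ℤ) :
    TrigRep (fun p : ℝ × ℝ => (c * (Complex.exp ((((n:ℝ) * p.1 : ℝ) : ℂ) * Complex.I) *
      Complex.exp ((((m:ℝ) * p.2 : ℝ) : ℂ) * Complex.I))).re) := by
  have key : ∀ p : ℝ × ℝ, (c * (Complex.exp ((((n:ℝ) * p.1 : ℝ) : ℂ) * Complex.I) *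
      Complex.exp ((((m:ℝ) * p.2 : ℝ) : ℂ) * Complex.I))).re
      = c.re * (Phi 1 n p.1 * Phi 1 m p.2) + (-c.re) * (Phi (-1) n p.1 * Phi (-1) m p.2)
        + ((-c.im) * (Phi 1 n p.1 * Phi (-1) m p.2) + (-c.im) * (Phi (-1) n p.1 * Phi 1 m p.2)) := by
    intro p
    rw [Complex.exp_mul_I, Complex.exp_mul_I, ← Complex.ofReal_cos, ← Complex.ofReal_sin,
      ← Complex.ofReal_cos, ← Complex.ofReal_sin]
    simp only [Phi, if_pos rfl, if_neg (by norm_num : ¬(-1 : ℤ) = 1), Complex.mul_re,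
      Complex.add_re, Complex.add_im, Complex.mul_im, Complex.ofReal_re, Complex.ofReal_im,
      Complex.I_re, Complex.I_im]
    norm_num
    ring
  have : (fun p : ℝ × ℝ => (c * (Complex.exp ((((n:ℝ) * p.1 : ℝ) : ℂ) * Complex.I) *
      Complex.exp ((((m:ℝ) * p.2 : ℝ) : ℂ) * Complex.I))).re)
      = fun p => c.re * (Phi 1 n p.1 * Phi 1 m p.2) + (-c.re) * (Phi (-1) n p.1 * Phi (-1) m p.2)
        + ((-c.im) * (Phi 1 n p.1 * Phi (-1) m p.2) + (-c.im) * (Phi (-1) n p.1 * Phi 1 m p.2)) :=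
    funext key
  rw [this]
  exact rep_add (rep_add (rep_basic _ _ _ _ _) (rep_basic _ _ _ _ _))
    (rep_add (rep_basic _ _ _ _ _) (rep_basic _ _ _ _ _))

theorem boundary_harmonics_dense (η₀ : ℝ) (hη₀ : 0 < η₀)
    (f : ℝ × ℝ → ℝ)
    (hf : MeasureTheory.MemLp f 2
      ((volume : Measure (ℝ × ℝ)).restrict (Set.Ioo (-π) π ×ˢ Set.Ioo (-π) π)))
    (ε : ℝ) (hε : 0 < ε) :
    ∃ (k : ℕ) (c : Fin k → ℝ) (n m : Fin k → ℕ) (ν μ : Fin k → ℤ),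
      (∀ i, Admissible (n i) (m i) (ν i) (μ i)) ∧
      MeasureTheory.eLpNorm
          (fun p : ℝ × ℝ =>
            f p - ∑ i, c i * (Real.sqrt (Real.cosh η₀ - Real.cos p.1) *
              Phi (ν i) ((n i : ℤ)) p.1 * Phi (μ i) ((m i : ℤ)) p.2))
          2 ((volume : Measure (ℝ × ℝ)).restrict (Set.Ioo (-π) π ×ˢ Set.Ioo (-π) π)) <
        ENNReal.ofReal ε := by
  classical
  have hcosh : 1 < Real.cosh η₀ := Real.one_lt_cosh.mpr hη₀.ne'
  have hwpos : ∀ θ : ℝ, 0 < Real.cosh η₀ - Real.cos θ := fun θ => by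
    have := Real.cos_le_one θ; linarith
  have hBpos : (0:ℝ) < Real.sqrt (Real.cosh η₀ + 1) := Real.sqrt_pos.mpr (by linarith)
  have hc₀pos : (0:ℝ) < Real.sqrt (Real.cosh η₀ - 1) := Real.sqrt_pos.mpr (by linarith)
  have hwB : ∀ θ : ℝ, Real.sqrt (Real.cosh η₀ - Real.cos θ) ≤ Real.sqrt (Real.cosh η₀ + 1) :=
    fun θ => Real.sqrt_le_sqrt (by have := Real.neg_one_le_cos θ; linarith)
  have hwc₀ : ∀ θ : ℝ, Real.sqrt (Real.cosh η₀ - 1) ≤ Real.sqrt (Real.cosh η₀ - Real.cos θ) :=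
    fun θ => Real.sqrt_le_sqrt (by have := Real.cos_le_one θ; linarith)
  have hwpos' : ∀ θ : ℝ, 0 < Real.sqrt (Real.cosh η₀ - Real.cos θ) :=
    fun θ => Real.sqrt_pos.mpr (hwpos θ)
  set μoo := (volume : Measure (ℝ × ℝ)).restrict (Set.Ioo (-π) π ×ˢ Set.Ioo (-π) π) with hμoo
  set μoc := (volume : Measure (ℝ × ℝ)).restrict (Set.Ioc (-π) π ×ˢ Set.Ioc (-π) π) with hμoc
  -- measurable representative of f
  have hf1 := hf.aestronglyMeasurable
  set f' : ℝ × ℝ → ℝ := hf1.mk f with hf'def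
  have hsm : StronglyMeasurable f' := hf1.stronglyMeasurable_mk
  have hff' : f =ᵐ[μoo] f' := hf1.ae_eq_mk
  have hf'mem : MemLp f' 2 μoo := hf.ae_eq hff'
  -- the quotient function g
  set g : ℝ × ℝ → ℝ := fun x => f' x / Real.sqrt (Real.cosh η₀ - Real.cos x.1) with hgdef
  have hwcont : Continuous fun θ : ℝ => Real.sqrt (Real.cosh η₀ - Real.cos θ) :=
    Real.continuous_sqrt.comp (continuous_const.sub Real.continuous_cos)
  have hgmeas : Measurable g :=
    hsm.measurable.div ((hwcont.measurable).comp measurable_fst)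
  set gC : ℝ × ℝ → ℂ := fun x => ((g x : ℝ) : ℂ) with hgCdef
  have hgCmeas : Measurable gC := Complex.measurable_ofReal.comp hgmeas
  -- transfer to the torus
  set ρ : AddCircle (2*π) × AddCircle (2*π) → ℝ × ℝ :=
    fun z => (((AddCircle.equivIoc (2*π) (-π) z.1 : ℝ)),
      ((AddCircle.equivIoc (2*π) (-π) z.2 : ℝ))) with hρdef
  have hρmeas : Measurable ρ := by
    refine Measurable.prod ?_ ?_
    · exact measurable_subtype_coe.comp
        ((AddCircle.measurableEquivIoc (2*π) (-π)).measurable.comp measurable_fst)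
    · exact measurable_subtype_coe.comp
        ((AddCircle.measurableEquivIoc (2*π) (-π)).measurable.comp measurable_snd)
  set G : AddCircle (2*π) × AddCircle (2*π) → ℂ := fun z => gC (ρ z) with hGdef
  have hGmeas : Measurable G := hgCmeas.comp hρmeas
  set Ψ : ℝ × ℝ → AddCircle (2*π) × AddCircle (2*π) :=
    Prod.map (fun x : ℝ => (x : AddCircle (2*π))) (fun x : ℝ => (x : AddCircle (2*π))) with hΨdef
  have hGΨ : ∀ x ∈ Set.Ioc (-π) π ×ˢ Set.Ioc (-π) π, G (Ψ x) = gC x := by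
    rintro ⟨a, b⟩ ⟨ha, hb⟩
    show gC (ρ (Ψ (a, b))) = gC (a, b)
    have h1 : ρ (Ψ (a, b)) = (a, b) := by
      show (((AddCircle.equivIoc (2*π) (-π) ((a : ℝ) : AddCircle (2*π)) : ℝ)),
        ((AddCircle.equivIoc (2*π) (-π) ((b : ℝ) : AddCircle (2*π)) : ℝ))) = (a, b)
      rw [equivIoc_coe a ha, equivIoc_coe b hb]
    rw [h1]
  have hGΨae : (fun x => G (Ψ x)) =ᵐ[μoc] gC := by
    filter_upwards [self_mem_ae_restrict (measurableSet_Ioc.prod measurableSet_Ioc)] with x hx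
    exact hGΨ x hx
  -- gC is MemLp
  have hgC_bound : ∀ x : ℝ × ℝ,
      ‖gC x‖ ≤ ‖(Real.sqrt (Real.cosh η₀ - 1))⁻¹ * f' x‖ := by
    intro x
    have h1 : ‖gC x‖ = |f' x| / Real.sqrt (Real.cosh η₀ - Real.cos x.1) := by
      rw [hgCdef]
      simp only [Complex.norm_real]
      rw [hgdef]
      simp only [Real.norm_eq_abs, abs_div,
        abs_of_nonneg (Real.sqrt_nonneg (Real.cosh η₀ - Real.cos x.1))]
    rw [h1]
    have h2 : |f' x| / Real.sqrt (Real.cosh η₀ - Real.cos x.1)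
        ≤ |f' x| / Real.sqrt (Real.cosh η₀ - 1) := by
      exact div_le_div_of_nonneg_left (abs_nonneg _) hc₀pos (hwc₀ x.1)
    refine le_trans h2 ?_
    rw [norm_mul, Real.norm_eq_abs, Real.norm_eq_abs, div_eq_inv_mul,
      abs_of_nonneg (le_of_lt (inv_pos.mpr hc₀pos))]
  have hgCmem : MemLp gC 2 μoo := by
    constructor
    · exact hgCmeas.aestronglyMeasurable
    · have heq : (fun x : ℝ × ℝ => (Real.sqrt (Real.cosh η₀ - 1))⁻¹ * f' x)
          = (Real.sqrt (Real.cosh η₀ - 1))⁻¹ • f' := by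
        funext x
        simp [smul_eq_mul]
      have h1 : eLpNorm gC 2 μoo
          ≤ eLpNorm (fun x => (Real.sqrt (Real.cosh η₀ - 1))⁻¹ * f' x) 2 μoo :=
        eLpNorm_mono hgC_bound
      rw [heq, eLpNorm_const_smul] at h1
      exact lt_of_le_of_lt h1 (ENNReal.mul_lt_top ENNReal.coe_lt_top hf'mem.2)
  -- G is MemLp on the torus
  have hGmem : MemLp G 2 (volume : Measure (AddCircle (2*π) × AddCircle (2*π))) := by
    constructor
    · exact hGmeas.aestronglyMeasurable
    · have h1 : eLpNorm (G ∘ Ψ) 2 μoc =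
          eLpNorm G 2 (volume : Measure (AddCircle (2*π) × AddCircle (2*π))) :=
        eLpNorm_comp_measurePreserving hGmeas.aestronglyMeasurable mp_Psi
      rw [← h1, show G ∘ Ψ = fun x => G (Ψ x) from rfl, eLpNorm_congr_ae hGΨae,
        hμoc, ← square_ae, ← hμoo]
      exact hgCmem.2
  -- approximate G on the torus
  obtain ⟨P, hPmem, hPlt⟩ := torus_approx G hGmem
    (ε / (Real.sqrt (Real.cosh η₀ + 1) + 1)) (by positivity)
  obtain ⟨k, cC, v, hPsum⟩ := Submodule.mem_span_set'.mp hPmem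
  choose nm hnm using fun i => (v i).2
  -- the real trig polynomial h
  set F : Fin k → ℝ × ℝ → ℝ := fun i x =>
    (cC i * (Complex.exp (((((nm i).1 : ℝ) * x.1 : ℝ) : ℂ) * Complex.I) *
      Complex.exp (((((nm i).2 : ℝ) * x.2 : ℝ) : ℂ) * Complex.I))).re with hFdef
  set h : ℝ × ℝ → ℝ := fun x => ∑ i, F i x with hhdef
  have hrep : TrigRep h := rep_sum F (fun i => rep_re_term (cC i) (nm i).1 (nm i).2)
  have hPapp : ∀ x : ℝ × ℝ, P (Ψ x) = ∑ i, cC i *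
      (Complex.exp (((((nm i).1 : ℝ) * x.1 : ℝ) : ℂ) * Complex.I) *
        Complex.exp (((((nm i).2 : ℝ) * x.2 : ℝ) : ℂ) * Complex.I)) := by
    intro x
    rw [← hPsum, ContinuousMap.sum_apply]
    refine Finset.sum_congr rfl fun i _ => ?_
    rw [ContinuousMap.smul_apply, smul_eq_mul]
    congr 1
    rw [← hnm i]
    show fourier (nm i).1 ((x.1 : ℝ) : AddCircle (2*π)) *
        fourier (nm i).2 ((x.2 : ℝ) : AddCircle (2*π)) = _
    rw [fourier_eq, fourier_eq]
  have hhre : ∀ x : ℝ × ℝ, h x = (P (Ψ x)).re := by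
    intro x
    rw [hPapp x, Complex.re_sum]
  -- extract the representation data
  obtain ⟨K, c, nn, mm, νν, μμ, hadm, heqn⟩ := hrep
  refine ⟨K, c, nn, mm, νν, μμ, hadm, ?_⟩
  -- rewrite the difference
  have key : (fun p : ℝ × ℝ =>
        f p - ∑ i, c i * (Real.sqrt (Real.cosh η₀ - Real.cos p.1) *
          Phi (νν i) ((nn i : ℤ)) p.1 * Phi (μμ i) ((mm i : ℤ)) p.2))
      =ᵐ[μoo] fun p => Real.sqrt (Real.cosh η₀ - Real.cos p.1) * (g p - h p) := by
    filter_upwards [hff'] with p hp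
    have hsum : ∑ i, c i * (Real.sqrt (Real.cosh η₀ - Real.cos p.1) *
        Phi (νν i) ((nn i : ℤ)) p.1 * Phi (μμ i) ((mm i : ℤ)) p.2)
        = Real.sqrt (Real.cosh η₀ - Real.cos p.1) * h p := by
      rw [heqn p, Finset.mul_sum]
      refine Finset.sum_congr rfl fun i _ => ?_
      ring
    have hfp : f p = Real.sqrt (Real.cosh η₀ - Real.cos p.1) * g p := by
      rw [hp]
      show f' p = Real.sqrt (Real.cosh η₀ - Real.cos p.1) *
        (f' p / Real.sqrt (Real.cosh η₀ - Real.cos p.1))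
      rw [mul_comm, div_mul_cancel₀ _ (hwpos' p.1).ne']
    rw [hsum, hfp]
    ring
  rw [eLpNorm_congr_ae key]
  -- pull out the weight
  have step1 : eLpNorm (fun p : ℝ × ℝ =>
        Real.sqrt (Real.cosh η₀ - Real.cos p.1) * (g p - h p)) 2 μoo
      ≤ ENNReal.ofReal (Real.sqrt (Real.cosh η₀ + 1)) *
        eLpNorm (fun p => g p - h p) 2 μoo := by
    have hmono : eLpNorm (fun p : ℝ × ℝ =>
          Real.sqrt (Real.cosh η₀ - Real.cos p.1) * (g p - h p)) 2 μoo
        ≤ eLpNorm (fun p => Real.sqrt (Real.cosh η₀ + 1) * (g p - h p)) 2 μoo := by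
      refine eLpNorm_mono fun x => ?_
      rw [Real.norm_eq_abs, Real.norm_eq_abs, abs_mul, abs_mul,
        abs_of_nonneg (Real.sqrt_nonneg _), abs_of_nonneg (Real.sqrt_nonneg _)]
      exact mul_le_mul_of_nonneg_right (hwB x.1) (abs_nonneg _)
    refine le_trans hmono ?_
    have heq2 : (fun p : ℝ × ℝ => Real.sqrt (Real.cosh η₀ + 1) * (g p - h p))
        = (Real.sqrt (Real.cosh η₀ + 1)) • (fun p : ℝ × ℝ => g p - h p) := by
      funext x
      simp [smul_eq_mul]
    rw [heq2, eLpNorm_const_smul, Real.enorm_eq_ofReal hBpos.le]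
  have step2 : eLpNorm (fun p : ℝ × ℝ => g p - h p) 2 μoo
      ≤ eLpNorm (fun p : ℝ × ℝ => gC p - P (Ψ p)) 2 μoo := by
    refine eLpNorm_mono fun x => ?_
    have hx : g x - h x = (gC x - P (Ψ x)).re := by
      rw [hhre x, hgCdef]
      simp [Complex.sub_re]
    rw [hx, Real.norm_eq_abs]
    exact Complex.abs_re_le_norm _
  have step3 : eLpNorm (fun p : ℝ × ℝ => gC p - P (Ψ p)) 2 μoo
      = eLpNorm (fun z => G z - P z) 2
        (volume : Measure (AddCircle (2*π) × AddCircle (2*π))) := by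
    have hsub : (fun p : ℝ × ℝ => gC p - P (Ψ p)) =ᵐ[μoc]
        (fun z => G z - P z) ∘ Ψ := by
      filter_upwards [self_mem_ae_restrict (measurableSet_Ioc.prod measurableSet_Ioc)] with x hx
      show gC x - P (Ψ x) = G (Ψ x) - P (Ψ x)
      rw [hGΨ x hx]
    rw [hμoo, square_ae, ← hμoc, eLpNorm_congr_ae hsub]
    exact eLpNorm_comp_measurePreserving
      (hGmeas.aestronglyMeasurable.sub P.continuous.aestronglyMeasurable) mp_Psi
  have hfinal : eLpNorm (fun p : ℝ × ℝ =>
        Real.sqrt (Real.cosh η₀ - Real.cos p.1) * (g p - h p)) 2 μoo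
      < ENNReal.ofReal (Real.sqrt (Real.cosh η₀ + 1)) *
        ENNReal.ofReal (ε / (Real.sqrt (Real.cosh η₀ + 1) + 1)) := by
    refine lt_of_le_of_lt (le_trans step1 (mul_le_mul_right (step2.trans step3.le) _)) ?_
    refine (ENNReal.mul_lt_mul_iff_right ?_ ?_).mpr hPlt
    · exact (ENNReal.ofReal_pos.mpr hBpos).ne'
    · exact ENNReal.ofReal_ne_top
  refine lt_of_lt_of_le hfinal ?_
  rw [← ENNReal.ofReal_mul hBpos.le]
  refine ENNReal.ofReal_le_ofReal ?_
  rw [div_eq_inv_mul, ← mul_assoc]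
  have hlt : Real.sqrt (Real.cosh η₀ + 1) * (Real.sqrt (Real.cosh η₀ + 1) + 1)⁻¹ ≤ 1 := by
    rw [mul_inv_le_iff₀ (by linarith)]
    linarith
  nlinarith [hlt, hε.le]
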